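/- Let F be a multiset of edges all incident to a common vertex v in a complete graph with edge weights ω satisfying the triangle inequality, with |F| even, and let U be the set of vertices ≠ v incident to an odd number of edges of F. Then for any perfect matching M_v on U (viewed as edges of the complete graph), ω(M_v) ≤ ω(F) and |M_v| ≤ |F|. -/
import Mathlib


/-- Degree of a vertex in a multigraph given by a multiset of edges
(a loop contributes 2). -/
def mdeg {V : Type*} [DecidableEq V] (E : Multiset (Sym2 V)) (v : V) : ℕ :=
  (E.map (fun e => if e = Sym2.diag v then 2 else if v ∈ e then 1 else 0)).sum

theorem stmt_4 {V : Type*} [Fintype V] [DecidableEq V]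
    (ω : Sym2 V → ℕ)
    (htri : ∀ a b c : V, ω s(a, b) ≤ ω s(a, c) + ω s(c, b))
    (v : V) (F : Multiset (Sym2 V)) (hF : ∀ e ∈ F, v ∈ e)
    (heven : Even (Multiset.card F))
    (U : Finset V)
    (hU : U = Finset.univ.filter (fun u => u ≠ v ∧ Odd (mdeg F u)))
    (M : Finset (Sym2 V))
    (hMloop : ∀ e ∈ M, ¬ e.IsDiag)
    (hMU : ∀ e ∈ M, ∀ u, u ∈ e → u ∈ U)
    (hMperf : ∀ u ∈ U, ∃! e, e ∈ M ∧ u ∈ e) :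
    (∑ e ∈ M, ω e) ≤ (F.map ω).sum ∧ M.card ≤ Multiset.card F := by
  classical
  have hUne : ∀ u ∈ U, u ≠ v := by
    intro u hu; rw [hU, Finset.mem_filter] at hu; exact hu.2.1
  -- each u ∈ U: s(v,u) ∈ F
  have hA : ∀ u ∈ U, s(v, u) ∈ F := by
    intro u hu
    have hne : u ≠ v := hUne u hu
    rw [hU, Finset.mem_filter] at hu
    have hodd := hu.2.2
    by_contra hnot
    have : mdeg F u = 0 := by
      unfold mdeg
      rw [Multiset.sum_eq_zero]
      intro x hx
      rw [Multiset.mem_map] at hx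
      obtain ⟨e, he, rfl⟩ := hx
      have hve := hF e he
      have hue : u ∉ e := by
        intro hmem
        exact hnot (by
          rw [← (Sym2.mem_and_mem_iff (Ne.symm hne)).mp ⟨hve, hmem⟩]; exact he)
      have h1 : e ≠ Sym2.diag u := by
        intro h; apply hue; rw [h]; simp [Sym2.diag]
      simp [h1, hue]
    rw [this] at hodd; simp at hodd
  -- multiset of edges s(v,u), u∈U is ≤ F
  have hinj : Set.InjOn (fun u => s(v, u)) U := by
    intro a ha b hb h
    simp only [Sym2.eq, Sym2.rel_iff', Prod.mk.injEq, Prod.swap_prod_mk] at h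
    rcases h with ⟨-, h⟩ | ⟨h1, h2⟩
    · exact h
    · exact absurd h1.symm (hUne b hb)
  have hnodup : (U.val.map fun u => s(v, u)).Nodup :=
    Multiset.Nodup.map_on (fun a ha b hb => hinj (by simpa using ha) (by simpa using hb)) U.nodup
  have hB : (U.val.map fun u => s(v, u)) ≤ F := by
    rw [Multiset.le_iff_subset hnodup]
    intro e he
    rw [Multiset.mem_map] at he
    obtain ⟨u, hu, rfl⟩ := he
    exact hA u (by simpa using hu)
  have hcardU : U.card ≤ Multiset.card F := by
    have := Multiset.card_le_card hB
    simpa using this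
  have hsumU : (∑ u ∈ U, ω s(v, u)) ≤ (F.map ω).sum := by
    have := Multiset.card_le_card hB -- dummy
    have h2 : ((U.val.map fun u => s(v, u)).map ω) ≤ F.map ω := Multiset.map_le_map hB
    obtain ⟨w, hw⟩ := Multiset.le_iff_exists_add.mp h2
    have h3 : ((U.val.map fun u => s(v, u)).map ω).sum ≤ (F.map ω).sum := by
      rw [hw, Multiset.sum_add]; exact Nat.le_add_right _ _
    have h4 : (∑ u ∈ U, ω s(v, u)) = ((U.val.map fun u => s(v, u)).map ω).sum := by
      rw [Multiset.map_map]; rfl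
    rw [h4]; exact h3
  -- choose for each u its unique matching edge
  have hex : ∀ u : V, ∃ e : Sym2 V, u ∈ U → (e ∈ M ∧ u ∈ e) ∧ ∀ e', e' ∈ M → u ∈ e' → e' = e := by
    intro u
    by_cases hu : u ∈ U
    · obtain ⟨e, he, huniq⟩ := hMperf u hu
      exact ⟨e, fun _ => ⟨he, fun e' h1 h2 => huniq e' ⟨h1, h2⟩⟩⟩
    · exact ⟨s(v, v), fun h => absurd h hu⟩
  choose g hg using hex
  have hfib : ∀ a b, s(a, b) ∈ M → U.filter (fun u => g u = s(a, b)) = {a, b} := by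
    intro a b he
    have ha : a ∈ U := hMU _ he a (Sym2.mem_mk_left a b)
    have hb : b ∈ U := hMU _ he b (Sym2.mem_mk_right a b)
    ext u
    simp only [Finset.mem_filter, Finset.mem_insert, Finset.mem_singleton]
    constructor
    · rintro ⟨hu, hgu⟩
      have h2 := (hg u hu).1.2
      rw [hgu] at h2
      exact Sym2.mem_iff.mp h2
    · rintro (rfl | rfl)
      · exact ⟨ha, ((hg _ ha).2 _ he (Sym2.mem_mk_left _ _)).symm⟩
      · exact ⟨hb, ((hg _ hb).2 _ he (Sym2.mem_mk_right _ _)).symm⟩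
  have hmaps : ∀ u ∈ U, g u ∈ M := fun u hu => (hg u hu).1.1
  have hpart : ∑ e ∈ M, ∑ u ∈ U.filter (fun u => g u = e), ω s(v, u) = ∑ u ∈ U, ω s(v, u) :=
    Finset.sum_fiberwise_of_maps_to hmaps _
  have hedge : ∀ e ∈ M, ω e ≤ ∑ u ∈ U.filter (fun u => g u = e), ω s(v, u) := by
    intro e
    induction e using Sym2.ind with
    | _ a b =>
      intro he
      have hab : a ≠ b := by
        intro h; exact hMloop _ he (by rw [h]; exact Sym2.mk_isDiag_iff.mpr rfl)
      rw [hfib a b he, Finset.sum_pair hab]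
      calc ω s(a, b) ≤ ω s(a, v) + ω s(v, b) := htri a b v
        _ = ω s(v, a) + ω s(v, b) := by rw [Sym2.eq_swap]
  have hcardfib : ∀ e ∈ M, (U.filter (fun u => g u = e)).card = 2 := by
    intro e
    induction e using Sym2.ind with
    | _ a b =>
      intro he
      have hab : a ≠ b := by
        intro h; exact hMloop _ he (by rw [h]; exact Sym2.mk_isDiag_iff.mpr rfl)
      rw [hfib a b he, Finset.card_pair hab]
  constructor
  · calc ∑ e ∈ M, ω e ≤ ∑ e ∈ M, ∑ u ∈ U.filter (fun u => g u = e), ω s(v, u) :=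
          Finset.sum_le_sum hedge
      _ = ∑ u ∈ U, ω s(v, u) := hpart
      _ ≤ (F.map ω).sum := hsumU
  · have hc : U.card = 2 * M.card := by
      have := Finset.card_eq_sum_card_fiberwise hmaps
      rw [this, Finset.sum_congr rfl hcardfib]
      simp [mul_comm]
    omega
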